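/- Let A₁,…,A_m be n×n complex matrices with singular values σ₁(·) ≥ σ₂(·) ≥ ⋯, let s ≥ 1 and k ∈ {1,…,n}, and let p₁,…,p_m be positive reals with Σ_{i=1}^m 1/p_i = 1. Then Σ_{j=1}^k σ_j(A₁⋯A_m)^s ≤ ∏_{i=1}^m (Σ_{j=1}^k σ_j(A_i)^{s p_i})^{1/p_i} ≤ Σ_{i=1}^m (1/p_i) Σ_{j=1}^k σ_j(A_i)^{s p_i}. -/

import Mathlib

/-- Sorted (descending) eigenvalues of a Hermitian matrix. -/
noncomputable def eigsDesc {n : ℕ} {A : Matrix (Fin n) (Fin n) ℂ} (hA : A.IsHermitian) :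
    Fin n → ℝ :=
  fun j => hA.eigenvalues (Tuple.sort hA.eigenvalues j.rev)

/-- The singular values of a square complex matrix, in descending order:
`svals A j` is the `(j+1)`-st largest singular value of `A`. -/
noncomputable def svals {n : ℕ} (A : Matrix (Fin n) (Fin n) ℂ) : Fin n → ℝ :=
  fun j => Real.sqrt (eigsDesc (Matrix.isHermitian_conjTranspose_mul_self A) j)

section KyFanAux

open Matrix Finset

variable {l n : ℕ}


/-- The increasing enumeration of a cardinality-`l` subset of `Fin n`. -/
noncomputable def semb (S : {s : Finset (Fin n) // s.card = l}) : Fin l → Fin n :=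
  S.1.orderEmbOfFin S.2

lemma semb_strictMono (S : {s : Finset (Fin n) // s.card = l}) : StrictMono (semb S) :=
  (S.1.orderEmbOfFin S.2).strictMono

lemma semb_injective (S : {s : Finset (Fin n) // s.card = l}) : Function.Injective (semb S) :=
  (semb_strictMono S).injective

lemma semb_mem (S : {s : Finset (Fin n) // s.card = l}) (i : Fin l) : semb S i ∈ S.1 :=
  Finset.orderEmbOfFin_mem _ _ _

lemma range_semb (S : {s : Finset (Fin n) // s.card = l}) :
    Set.range (semb S) = ↑S.1 := Finset.range_orderEmbOfFin _ _

/-- decomposition of an injective tuple as (image, permutation). -/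
lemma semb_decomp_bijective :
    Function.Bijective (fun P : {s : Finset (Fin n) // s.card = l} × Equiv.Perm (Fin l) =>
      (⟨semb P.1 ∘ P.2, (semb_injective P.1).comp P.2.injective⟩ :
        {f : Fin l → Fin n // Function.Injective f})) := by
  constructor
  · rintro ⟨S, σ⟩ ⟨T, τ⟩ h
    simp only [Subtype.mk.injEq] at h
    have hST : S = T := by
      have h1 : Set.range (semb S ∘ ⇑σ) = Set.range (semb T ∘ ⇑τ) := by rw [h]
      rw [Set.range_comp, Set.range_comp] at h1
      simp only [Equiv.range_eq_univ, Set.image_univ] at h1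
      rw [range_semb, range_semb] at h1
      exact Subtype.ext (Finset.coe_injective h1)
    subst hST
    have hστ : σ = τ := by
      apply Equiv.coe_fn_injective
      funext i
      exact semb_injective S (congrFun h i)
    rw [hστ]
  · rintro ⟨f, hf⟩
    have hcard : (Finset.image f Finset.univ).card = l := by
      rw [Finset.card_image_of_injective _ hf, Finset.card_univ, Fintype.card_fin]
    set S : {s : Finset (Fin n) // s.card = l} := ⟨Finset.image f Finset.univ, hcard⟩ with hS
    have hmem : ∀ i, f i ∈ S.1 := fun i => Finset.mem_image_of_mem f (Finset.mem_univ i)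
    -- f as a bijection onto S
    let e : Fin l ≃o S.1 := S.1.orderIsoOfFin S.2
    let f' : Fin l → S.1 := fun i => ⟨f i, hmem i⟩
    have hf' : Function.Bijective f' := by
      rw [Fintype.bijective_iff_injective_and_card]
      refine ⟨fun i j hij => hf (congrArg Subtype.val hij), ?_⟩
      rw [Fintype.card_fin, Fintype.card_coe, S.2]
    refine ⟨⟨S, (Equiv.ofBijective f' hf').trans e.symm.toEquiv⟩, ?_⟩
    apply Subtype.ext
    funext i
    simp only [Function.comp_apply, Equiv.trans_apply]
    show semb S (e.symm (f' i)) = f i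
    have : (e (e.symm (f' i)) : Fin n) = semb S (e.symm (f' i)) :=
      Finset.coe_orderIsoOfFin_apply _ _ _
    rw [← this, OrderIso.apply_symm_apply]

theorem cauchyBinet (M : Matrix (Fin l) (Fin n) ℂ) (N : Matrix (Fin n) (Fin l) ℂ) :
    (M * N).det = ∑ S : {s : Finset (Fin n) // s.card = l},
      (M.submatrix id (semb S)).det * (N.submatrix (semb S) id).det := by
  classical
  have hrows : (M * N) = fun i => ∑ j : Fin n, M i j • N j := by
    funext i j
    simp [Matrix.mul_apply, Finset.sum_apply]
  have h1 : (M * N).det =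
      ∑ f : Fin l → Fin n, (∏ i, M i (f i)) * (N.submatrix f id).det  := by
    show Matrix.detRowAlternating (M * N) = _
    rw [hrows]
    rw [show Matrix.detRowAlternating (fun i => ∑ j : Fin n, M i j • N j) =
      (Matrix.detRowAlternating (R := ℂ) (n := Fin l)).toMultilinearMap
        (fun i => ∑ j : Fin n, M i j • N j) from rfl]
    rw [MultilinearMap.map_sum]
    refine Finset.sum_congr rfl fun f _ => ?_
    rw [MultilinearMap.map_smul_univ]
    rfl
  rw [h1]
  -- kill non-injective f
  rw [← Finset.sum_filter_of_ne (p := fun f => Function.Injective f)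
    (s := Finset.univ) (by
      intro f _ hne
      by_contra hinj
      apply hne
      obtain ⟨i, j, hij, hne2⟩ : ∃ i j, (N.submatrix f id) i = (N.submatrix f id) j ∧ i ≠ j := by
        simp only [Function.Injective, not_forall] at hinj
        obtain ⟨i, j, h1, h2⟩ := hinj
        exact ⟨i, j, by funext t; simp [Matrix.submatrix_apply, h1], h2⟩
      rw [Matrix.det_zero_of_row_eq hne2 hij, mul_zero])]
  rw [Finset.sum_subtype (p := fun f : Fin l → Fin n => Function.Injective f) _
    (by intro x; simp) (fun f => (∏ i, M i (f i)) * (N.submatrix f id).det)]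
  rw [← Fintype.sum_bijective _ semb_decomp_bijective _ _ (fun _ => rfl)]
  rw [Fintype.sum_prod_type]
  refine Finset.sum_congr rfl fun S _ => ?_
  -- now sum over permutations
  have key : ∀ σ : Equiv.Perm (Fin l),
      (N.submatrix (semb S ∘ σ) id).det
        = (Equiv.Perm.sign σ : ℂ) * (N.submatrix (semb S) id).det := by
    intro σ
    have : (N.submatrix (semb S ∘ σ) id) = (N.submatrix (semb S) id).submatrix σ id := rfl
    rw [this, Matrix.det_permute]
  calc ∑ σ : Equiv.Perm (Fin l), (∏ i, M i ((semb S ∘ σ) i)) * (N.submatrix (semb S ∘ σ) id).det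
      = (∑ σ : Equiv.Perm (Fin l), (Equiv.Perm.sign σ : ℂ) * ∏ i, M i (semb S (σ i)))
          * (N.submatrix (semb S) id).det := by
        rw [Finset.sum_mul]
        refine Finset.sum_congr rfl fun σ _ => ?_
        rw [key σ]; simp only [Function.comp_apply]; ring
    _ = (M.submatrix id (semb S)).det * (N.submatrix (semb S) id).det := by
        congr 1
        rw [← Matrix.det_transpose (M.submatrix id (semb S)), Matrix.det_apply']
        rfl

/-- `l`-th compound (multiplicative) matrix. -/
noncomputable def cmpd (l : ℕ) {n : ℕ} (A : Matrix (Fin n) (Fin n) ℂ) :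
    Matrix {s : Finset (Fin n) // s.card = l} {s : Finset (Fin n) // s.card = l} ℂ :=
  Matrix.of fun S T => (A.submatrix (semb S) (semb T)).det

lemma image_semb (S : {s : Finset (Fin n) // s.card = l}) :
    Finset.image (semb S) Finset.univ = S.1 := by
  apply Finset.coe_injective
  rw [Finset.coe_image, Finset.coe_univ, Set.image_univ, range_semb]

lemma exists_semb_not_mem {S T : {s : Finset (Fin n) // s.card = l}} (hST : S ≠ T) :
    ∃ i₀ : Fin l, semb S i₀ ∉ T.1 := by
  have hsub : ¬ S.1 ⊆ T.1 := by
    intro hsub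
    exact hST (Subtype.ext (Finset.eq_of_subset_of_card_le hsub (by rw [S.2, T.2])))
  obtain ⟨x, hxS, hxT⟩ := Finset.not_subset.mp hsub
  have : x ∈ Set.range (semb S) := by rw [range_semb]; exact hxS
  obtain ⟨i₀, rfl⟩ := this
  exact ⟨i₀, hxT⟩

lemma cmpd_mul (A B : Matrix (Fin n) (Fin n) ℂ) :
    cmpd l (A * B) = cmpd l A * cmpd l B := by
  ext S T
  have hsm : (A * B).submatrix (semb S) (semb T)
      = (A.submatrix (semb S) id) * (B.submatrix id (semb T)) := by
    ext i j
    simp [Matrix.mul_apply, Matrix.submatrix_apply]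
  show ((A * B).submatrix (semb S) (semb T)).det = _
  rw [hsm, cauchyBinet]
  simp only [Matrix.mul_apply, Matrix.submatrix_submatrix, Function.comp_id, Function.id_comp]
  rfl

lemma cmpd_one : cmpd l (1 : Matrix (Fin n) (Fin n) ℂ) = 1 := by
  ext S T
  by_cases hST : S = T
  · subst hST
    have : (1 : Matrix (Fin n) (Fin n) ℂ).submatrix (semb S) (semb S) = 1 := by
      ext i j
      by_cases hij : i = j
      · subst hij; simp
      · rw [Matrix.submatrix_apply, Matrix.one_apply_ne (fun h => hij (semb_injective S h)),
          Matrix.one_apply_ne hij]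
    show ((1 : Matrix (Fin n) (Fin n) ℂ).submatrix (semb S) (semb S)).det = _
    rw [this, Matrix.det_one, Matrix.one_apply_eq]
  · obtain ⟨i₀, hi₀⟩ := exists_semb_not_mem hST
    show ((1 : Matrix (Fin n) (Fin n) ℂ).submatrix (semb S) (semb T)).det = _
    rw [Matrix.one_apply_ne hST, Matrix.det_eq_zero_of_row_eq_zero i₀]
    intro j
    rw [Matrix.submatrix_apply, Matrix.one_apply_ne]
    intro h
    exact hi₀ (h ▸ semb_mem T j)

lemma cmpd_conjTranspose (A : Matrix (Fin n) (Fin n) ℂ) :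
    cmpd l Aᴴ = (cmpd l A)ᴴ := by
  ext S T
  show (Aᴴ.submatrix (semb S) (semb T)).det = star ((A.submatrix (semb T) (semb S)).det)
  rw [← Matrix.det_conjTranspose]
  congr 1

lemma cmpd_diagonal (d : Fin n → ℂ) :
    cmpd l (Matrix.diagonal d) = Matrix.diagonal (fun S => ∏ x ∈ S.1, d x) := by
  ext S T
  by_cases hST : S = T
  · subst hST
    have : (Matrix.diagonal d).submatrix (semb S) (semb S)
        = Matrix.diagonal (fun i => d (semb S i)) := by
      ext i j
      by_cases hij : i = j
      · subst hij; simp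
      · rw [Matrix.submatrix_apply, Matrix.diagonal_apply_ne _ (fun h => hij (semb_injective S h)),
          Matrix.diagonal_apply_ne _ hij]
    show ((Matrix.diagonal d).submatrix (semb S) (semb S)).det = _
    rw [this, Matrix.det_diagonal, Matrix.diagonal_apply_eq, ← image_semb S,
      Finset.prod_image (fun i _ j _ h => semb_injective S h)]
  · obtain ⟨i₀, hi₀⟩ := exists_semb_not_mem hST
    show ((Matrix.diagonal d).submatrix (semb S) (semb T)).det = _
    rw [Matrix.diagonal_apply_ne _ hST, Matrix.det_eq_zero_of_row_eq_zero i₀]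
    intro j
    rw [Matrix.submatrix_apply, Matrix.diagonal_apply_ne]
    intro h
    exact hi₀ (h ▸ semb_mem T j)

section NormFacts

open scoped Matrix.Norms.L2Operator

variable {I : Type*} [Fintype I] [DecidableEq I]

lemma norm_one_le_matrix : ‖(1 : Matrix I I ℂ)‖ ≤ 1 := by
  rw [Matrix.cstar_norm_def, _root_.map_one]
  exact ContinuousLinearMap.norm_id_le

lemma norm_le_one_of_unitary {U : Matrix I I ℂ} (hU : U ∈ Matrix.unitaryGroup I ℂ) :
    ‖U‖ ≤ 1 := by
  have h1 : Uᴴ * U = 1 := by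
    rw [← Matrix.star_eq_conjTranspose]
    exact (Unitary.mem_iff.mp hU).1
  have h2 : ‖U‖ * ‖U‖ ≤ 1 := by
    rw [← Matrix.l2_opNorm_conjTranspose_mul_self, h1]
    exact norm_one_le_matrix
  nlinarith [norm_nonneg (E := Matrix I I ℂ) U]

lemma norm_unitary_mul {U : Matrix I I ℂ} (hU : U ∈ Matrix.unitaryGroup I ℂ)
    (M : Matrix I I ℂ) : ‖U * M‖ = ‖M‖ := by
  refine le_antisymm ?_ ?_
  · calc ‖U * M‖ ≤ ‖U‖ * ‖M‖ := Matrix.l2_opNorm_mul U M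
      _ ≤ 1 * ‖M‖ := by
          exact mul_le_mul_of_nonneg_right (norm_le_one_of_unitary hU) (norm_nonneg _)
      _ = ‖M‖ := one_mul _
  · have h1 : Uᴴ * (U * M) = M := by
      rw [← Matrix.mul_assoc, ← Matrix.star_eq_conjTranspose, (Unitary.mem_iff.mp hU).1,
        Matrix.one_mul]
    calc ‖M‖ = ‖Uᴴ * (U * M)‖ := by rw [h1]
      _ ≤ ‖Uᴴ‖ * ‖U * M‖ := Matrix.l2_opNorm_mul _ _
      _ ≤ 1 * ‖U * M‖ := by
          refine mul_le_mul_of_nonneg_right ?_ (norm_nonneg _)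
          rw [Matrix.l2_opNorm_conjTranspose]
          exact norm_le_one_of_unitary hU
      _ = ‖U * M‖ := one_mul _

lemma norm_mul_unitary {U : Matrix I I ℂ} (hU : U ∈ Matrix.unitaryGroup I ℂ)
    (M : Matrix I I ℂ) : ‖M * U‖ = ‖M‖ := by
  refine le_antisymm ?_ ?_
  · calc ‖M * U‖ ≤ ‖M‖ * ‖U‖ := Matrix.l2_opNorm_mul M U
      _ ≤ ‖M‖ * 1 := by
          exact mul_le_mul_of_nonneg_left (norm_le_one_of_unitary hU) (norm_nonneg _)
      _ = ‖M‖ := mul_one _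
  · have h1 : (M * U) * Uᴴ = M := by
      rw [Matrix.mul_assoc, ← Matrix.star_eq_conjTranspose, (Unitary.mem_iff.mp hU).2,
        Matrix.mul_one]
    calc ‖M‖ = ‖(M * U) * Uᴴ‖ := by rw [h1]
      _ ≤ ‖M * U‖ * ‖Uᴴ‖ := Matrix.l2_opNorm_mul _ _
      _ ≤ ‖M * U‖ * 1 := by
          refine mul_le_mul_of_nonneg_left ?_ (norm_nonneg _)
          rw [Matrix.l2_opNorm_conjTranspose]
          exact norm_le_one_of_unitary hU
      _ = ‖M * U‖ := mul_one _

lemma norm_diagonal_entry_le (d : I → ℂ) (i : I) :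
    ‖d i‖ ≤ ‖Matrix.diagonal d‖ := by
  have heval : Matrix.toEuclideanLin (Matrix.diagonal d)
      ((WithLp.equiv 2 (I → ℂ)).symm (Pi.single i 1)) =
      (WithLp.equiv 2 (I → ℂ)).symm (Pi.single i (d i)) := by
    rw [Matrix.toEuclideanLin_apply_piLp_toLp]
    congr 1
    funext j
    rw [Matrix.mulVec_diagonal]
    by_cases hij : j = i
    · subst hij; simp
    · simp [Pi.single_apply, hij]
  have hle := ((Matrix.toEuclideanLin (𝕜 := ℂ) (m := I) (n := I)).trans
    LinearMap.toContinuousLinearMap (Matrix.diagonal d)).le_opNorm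
    ((WithLp.equiv 2 (I → ℂ)).symm (Pi.single i 1))
  have h2 : ((Matrix.toEuclideanLin (𝕜 := ℂ) (m := I) (n := I)).trans
      LinearMap.toContinuousLinearMap (Matrix.diagonal d))
      ((WithLp.equiv 2 (I → ℂ)).symm (Pi.single i 1)) =
      (WithLp.equiv 2 (I → ℂ)).symm (Pi.single i (d i)) := heval
  rw [h2] at hle
  have hn1 : ‖(WithLp.equiv 2 (I → ℂ)).symm (Pi.single i (d i))‖ = ‖d i‖ := by
    rw [show ((WithLp.equiv 2 (I → ℂ)).symm (Pi.single i (d i))) = EuclideanSpace.single i (d i)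
      from rfl, EuclideanSpace.norm_single]
  have hn2 : ‖(WithLp.equiv 2 (I → ℂ)).symm (Pi.single i (1 : ℂ))‖ = 1 := by
    rw [show ((WithLp.equiv 2 (I → ℂ)).symm (Pi.single i (1:ℂ))) = EuclideanSpace.single i (1:ℂ)
      from rfl, EuclideanSpace.norm_single, norm_one]
  rw [hn1, hn2, mul_one] at hle
  exact hle.trans_eq (Matrix.l2_opNorm_def (Matrix.diagonal d)).symm

lemma norm_diagonal_le {d : I → ℂ} {c : ℝ} (hc : 0 ≤ c) (hd : ∀ i, ‖d i‖ ≤ c) :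
    ‖Matrix.diagonal d‖ ≤ c := by
  rw [Matrix.l2_opNorm_def]
  refine ContinuousLinearMap.opNorm_le_bound _ hc fun x => ?_
  have hx : ((Matrix.toEuclideanLin (𝕜 := ℂ) (m := I) (n := I)).trans
      LinearMap.toContinuousLinearMap (Matrix.diagonal d)) x =
      (WithLp.equiv 2 (I → ℂ)).symm (Matrix.diagonal d *ᵥ (WithLp.equiv 2 (I → ℂ)) x) :=
    Matrix.toEuclideanLin_apply _ _
  rw [hx]
  rw [EuclideanSpace.norm_eq, EuclideanSpace.norm_eq]
  have hcsq : c * Real.sqrt (∑ i, ‖x i‖ ^ 2) = Real.sqrt (c ^ 2 * ∑ i, ‖x i‖ ^ 2) := by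
    rw [Real.sqrt_mul (sq_nonneg c), Real.sqrt_sq hc]
  rw [hcsq]
  apply Real.sqrt_le_sqrt
  rw [Finset.mul_sum]
  apply Finset.sum_le_sum
  intro i _
  have : ((WithLp.equiv 2 (I → ℂ)).symm (Matrix.diagonal d *ᵥ (WithLp.equiv 2 (I → ℂ)) x)) i
      = d i * x i := by
    show (Matrix.diagonal d *ᵥ (WithLp.equiv 2 (I → ℂ)) x) i = d i * x i
    rw [Matrix.mulVec_diagonal]
    rfl
  rw [this, norm_mul, mul_pow]
  have h0 : ‖x i‖ ^ 2 ≥ 0 := sq_nonneg _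
  exact mul_le_mul_of_nonneg_right (by
    have := hd i
    nlinarith [norm_nonneg (d i)]) h0

end NormFacts

section Svals
open scoped ComplexOrder

lemma eigsDesc_antitone {A : Matrix (Fin n) (Fin n) ℂ} (hA : A.IsHermitian) :
    Antitone (eigsDesc hA) := by
  intro i j hij
  exact Tuple.monotone_sort hA.eigenvalues (Fin.rev_le_rev.mpr hij)

lemma eigsDesc_nonneg {A : Matrix (Fin n) (Fin n) ℂ} (hA : A.PosSemidef) (j : Fin n) :
    0 ≤ eigsDesc hA.1 j :=
  hA.eigenvalues_nonneg _

lemma svals_nonneg (A : Matrix (Fin n) (Fin n) ℂ) (j : Fin n) : 0 ≤ svals A j :=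
  Real.sqrt_nonneg _

lemma svals_antitone (A : Matrix (Fin n) (Fin n) ℂ) : Antitone (svals A) := by
  intro i j hij
  exact Real.sqrt_le_sqrt (eigsDesc_antitone _ hij)

lemma sq_svals (A : Matrix (Fin n) (Fin n) ℂ) (j : Fin n) :
    svals A j ^ 2 = eigsDesc (Matrix.isHermitian_conjTranspose_mul_self A) j :=
  Real.sq_sqrt (eigsDesc_nonneg (Matrix.posSemidef_conjTranspose_mul_self A) j)

lemma le_val_of_strictMono {e : Fin l → Fin n} (he : StrictMono e) (j : Fin l) :
    (j : ℕ) ≤ (e j : ℕ) := by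
  suffices H : ∀ v, ∀ hv : v < l, v ≤ (e ⟨v, hv⟩ : ℕ) by
    have := H j j.2
    simpa using this
  intro v
  induction v with
  | zero => simp
  | succ w ih =>
    intro hv
    have hw : w < l := Nat.lt_of_succ_lt hv
    have h2 : e ⟨w, hw⟩ < e ⟨w + 1, hv⟩ := he (by simp [Fin.lt_def])
    have h3 := Fin.lt_def.mp h2
    have := ih hw
    omega

lemma prod_mem_le_prod_desc (hl : l ≤ n) {ν : Fin n → ℝ} (ha : Antitone ν)
    (h0 : ∀ j, 0 ≤ ν j) {T : Finset (Fin n)} (hT : T.card = l) :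
    ∏ x ∈ T, ν x ≤ ∏ j : Fin l, ν (Fin.castLE hl j) := by
  set S : {s : Finset (Fin n) // s.card = l} := ⟨T, hT⟩ with hS
  rw [show T = S.1 from rfl, ← image_semb S,
    Finset.prod_image (fun i _ j _ h => semb_injective S h)]
  apply Finset.prod_le_prod (fun j _ => h0 _)
  intro j _
  apply ha
  rw [Fin.le_def]
  exact le_val_of_strictMono (semb_strictMono S) j

open scoped Matrix.Norms.L2Operator

lemma cmpd_mem_unitaryGroup {U : Matrix (Fin n) (Fin n) ℂ}
    (hU : U ∈ Matrix.unitaryGroup (Fin n) ℂ) :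
    cmpd l U ∈ Matrix.unitaryGroup {s : Finset (Fin n) // s.card = l} ℂ := by
  rw [Matrix.mem_unitaryGroup_iff]
  rw [show star (cmpd l U) = cmpd l (star U) by
    rw [Matrix.star_eq_conjTranspose, Matrix.star_eq_conjTranspose, cmpd_conjTranspose]]
  rw [← cmpd_mul, (Unitary.mem_iff.mp hU).2, cmpd_one]

set_option maxHeartbeats 2000000 in
lemma norm_cmpd_eq (hl : l ≤ n) (A : Matrix (Fin n) (Fin n) ℂ) :
    ‖cmpd l A‖ = ∏ j : Fin l, svals A (Fin.castLE hl j) := by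
  classical
  set hH := Matrix.isHermitian_conjTranspose_mul_self A with hhH
  set μ : Fin n → ℝ := hH.eigenvalues with hμ
  set ν : Fin n → ℝ := eigsDesc hH with hν
  have hPSD := Matrix.posSemidef_conjTranspose_mul_self A
  have hν0 : ∀ j, 0 ≤ ν j := fun j => eigsDesc_nonneg hPSD j
  have hμ0 : ∀ j, 0 ≤ μ j := fun j => hPSD.eigenvalues_nonneg j
  have hνa : Antitone ν := eigsDesc_antitone hH
  set ρ : Equiv.Perm (Fin n) := Fin.revPerm.trans (Tuple.sort μ) with hρ
  have hρν : ∀ j, ν j = μ (ρ j) := fun j => rfl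
  set P : ℝ := ∏ j : Fin l, ν (Fin.castLE hl j) with hP
  have hP0 : 0 ≤ P := Finset.prod_nonneg fun j _ => hν0 _
  -- square of the norm
  have hsq : ‖cmpd l A‖ * ‖cmpd l A‖ = ‖cmpd l (Aᴴ * A)‖ := by
    rw [← Matrix.l2_opNorm_conjTranspose_mul_self, ← cmpd_conjTranspose, ← cmpd_mul]
  -- spectral theorem
  set V : Matrix (Fin n) (Fin n) ℂ := (hH.eigenvectorUnitary : Matrix (Fin n) (Fin n) ℂ) with hV
  have hVu : V ∈ Matrix.unitaryGroup (Fin n) ℂ := hH.eigenvectorUnitary.2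
  have hspec : Aᴴ * A = V * Matrix.diagonal (RCLike.ofReal ∘ μ) * (star V) :=
    hH.spectral_theorem
  have hnormH : ‖cmpd l (Aᴴ * A)‖ = ‖cmpd l (Matrix.diagonal (RCLike.ofReal ∘ μ))‖ := by
    rw [hspec, cmpd_mul, cmpd_mul, Matrix.mul_assoc]
    rw [norm_unitary_mul (cmpd_mem_unitaryGroup hVu)]
    rw [norm_mul_unitary (cmpd_mem_unitaryGroup (Unitary.star_mem hVu))]
  -- the compound of the diagonal
  have hdiag : cmpd l (Matrix.diagonal (RCLike.ofReal ∘ μ))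
      = Matrix.diagonal (fun S : {s : Finset (Fin n) // s.card = l} =>
          ((∏ x ∈ S.1, μ x : ℝ) : ℂ)) := by
    rw [cmpd_diagonal]
    congr 1
    funext S
    push_cast
    rfl
  have hentry_norm : ∀ S : {s : Finset (Fin n) // s.card = l},
      ‖((∏ x ∈ S.1, μ x : ℝ) : ℂ)‖ = ∏ x ∈ S.1, μ x := by
    intro S
    rw [Complex.norm_real, Real.norm_eq_abs, abs_of_nonneg (Finset.prod_nonneg fun x _ => hμ0 x)]
  have hentry_le : ∀ S : {s : Finset (Fin n) // s.card = l}, ∏ x ∈ S.1, μ x ≤ P := by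
    intro S
    have himg : ∏ x ∈ S.1, μ x = ∏ j ∈ S.1.image ρ.symm, ν j := by
      rw [Finset.prod_image (fun i _ j _ h => ρ.symm.injective h)]
      refine Finset.prod_congr rfl fun x _ => ?_
      rw [hρν, Equiv.apply_symm_apply]
    rw [himg]
    exact prod_mem_le_prod_desc hl hνa hν0
      (by rw [Finset.card_image_of_injective _ ρ.symm.injective, S.2])
  -- the top subset achieving P
  have hnd : ‖cmpd l (Matrix.diagonal (RCLike.ofReal ∘ μ))‖ = P := by
    rw [hdiag]
    refine le_antisymm (norm_diagonal_le hP0 fun S => (hentry_norm S).trans_le (hentry_le S)) ?_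
    have hinj : Function.Injective (fun j : Fin l => ρ (Fin.castLE hl j)) :=
      fun i j hij => Fin.castLE_injective hl (ρ.injective hij)
    have hcard : ((Finset.univ : Finset (Fin l)).image
        (fun j => ρ (Fin.castLE hl j))).card = l := by
      rw [Finset.card_image_of_injective _ hinj, Finset.card_univ, Fintype.card_fin]
    set S₀ : {s : Finset (Fin n) // s.card = l} :=
      ⟨(Finset.univ : Finset (Fin l)).image (fun j => ρ (Fin.castLE hl j)), hcard⟩
    have hval : ∏ x ∈ S₀.1, μ x = P := by
      show ∏ x ∈ (Finset.univ : Finset (Fin l)).image (fun j => ρ (Fin.castLE hl j)), μ x = P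
      rw [Finset.prod_image (fun i _ j _ h => hinj h)]
      exact Finset.prod_congr rfl fun j _ => (hρν _).symm
    calc P = ‖((∏ x ∈ S₀.1, μ x : ℝ) : ℂ)‖ := by rw [hentry_norm, hval]
      _ ≤ _ := norm_diagonal_entry_le
          (fun S : {s : Finset (Fin n) // s.card = l} => ((∏ x ∈ S.1, μ x : ℝ) : ℂ)) S₀
  -- put it together
  have hsq2 : ‖cmpd l A‖ * ‖cmpd l A‖ = P := by rw [hsq, hnormH, hnd]
  have hprodsq : (∏ j : Fin l, svals A (Fin.castLE hl j)) ^ 2 = P := by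
    rw [← Finset.prod_pow]
    exact Finset.prod_congr rfl fun j _ => sq_svals A _
  have h1 : 0 ≤ ∏ j : Fin l, svals A (Fin.castLE hl j) :=
    Finset.prod_nonneg fun j _ => svals_nonneg A _
  rw [← Real.sqrt_sq (norm_nonneg _), ← Real.sqrt_sq h1, hprodsq, sq, hsq2]

lemma horn (hl : l ≤ n) (A B : Matrix (Fin n) (Fin n) ℂ) :
    ∏ j : Fin l, svals (A * B) (Fin.castLE hl j) ≤
      (∏ j : Fin l, svals A (Fin.castLE hl j)) * ∏ j : Fin l, svals B (Fin.castLE hl j) := by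
  rw [← norm_cmpd_eq hl, ← norm_cmpd_eq hl, ← norm_cmpd_eq hl, cmpd_mul]
  exact Matrix.l2_opNorm_mul _ _

lemma horn_list (hl : l ≤ n) (L : List (Matrix (Fin n) (Fin n) ℂ)) (hL : L ≠ []) :
    ∏ j : Fin l, svals L.prod (Fin.castLE hl j) ≤
      (L.map (fun A => ∏ j : Fin l, svals A (Fin.castLE hl j))).prod := by
  induction L with
  | nil => exact absurd rfl hL
  | cons a L ih =>
    cases L with
    | nil => simp
    | cons b L' =>
      rw [List.prod_cons, List.map_cons, List.prod_cons]
      refine le_trans (horn hl a (b :: L').prod) ?_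
      refine mul_le_mul_of_nonneg_left (ih (by simp)) ?_
      exact Finset.prod_nonneg fun j _ => svals_nonneg a _

end Svals

section Majorization

/-- A downward-closed finset of naturals is an initial segment. -/
lemma downward_closed_eq_range {S : Finset ℕ} (h : ∀ j ∈ S, ∀ i ≤ j, i ∈ S) :
    S = Finset.range S.card := by
  have hsub : S ⊆ Finset.range S.card := by
    intro a ha
    rw [Finset.mem_range]
    by_contra hlt
    push_neg at hlt
    have h1 : Finset.range (a + 1) ⊆ S := by
      intro i hi
      exact h a ha i (Nat.lt_succ_iff.mp (Finset.mem_range.mp hi))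
    have := Finset.card_le_card h1
    rw [Finset.card_range] at this
    omega
  exact Finset.eq_of_subset_of_card_le hsub (by rw [Finset.card_range])

/-- Weak majorization from (multiplicative) log-majorization, for nonnegative
antitone sequences. -/
lemma sum_le_sum_of_prod_le {k : ℕ} {x y : ℕ → ℝ}
    (hxa : ∀ i j, i ≤ j → x j ≤ x i) (hx0 : ∀ j, 0 ≤ x j) (hy0 : ∀ j, 0 ≤ y j)
    (hprod : ∀ l ≤ k, ∏ j ∈ Finset.range l, x j ≤ ∏ j ∈ Finset.range l, y j) :
    ∑ j ∈ Finset.range k, x j ≤ ∑ j ∈ Finset.range k, y j := by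
  classical
  set F : Finset ℕ := (Finset.range k).filter (fun j => 0 < x j) with hF
  have hdc : ∀ j ∈ F, ∀ i ≤ j, i ∈ F := by
    intro j hj i hij
    rw [hF, Finset.mem_filter, Finset.mem_range] at hj ⊢
    exact ⟨lt_of_le_of_lt hij hj.1, lt_of_lt_of_le hj.2 (hxa i j hij)⟩
  set r : ℕ := F.card with hr
  have hFr : F = Finset.range r := downward_closed_eq_range hdc
  have hrk : r ≤ k := by
    have := Finset.card_le_card (Finset.filter_subset (fun j => 0 < x j) (Finset.range k))
    rwa [Finset.card_range] at this
  -- positivity on the initial segment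
  have hxpos : ∀ j < r, 0 < x j := by
    intro j hj
    have : j ∈ F := by rw [hFr]; exact Finset.mem_range.mpr hj
    exact (Finset.mem_filter.mp this).2
  have hxzero : ∀ j, r ≤ j → j < k → x j = 0 := by
    intro j hrj hjk
    by_contra hne
    have hpos : 0 < x j := lt_of_le_of_ne (hx0 j) (Ne.symm hne)
    have : j ∈ F := Finset.mem_filter.mpr ⟨Finset.mem_range.mpr hjk, hpos⟩
    rw [hFr, Finset.mem_range] at this
    omega
  have hypos : ∀ j < r, 0 < y j := by
    intro j hj
    have hprodx : 0 < ∏ i ∈ Finset.range (j + 1), x i :=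
      Finset.prod_pos fun i hi => hxpos i (lt_of_lt_of_le (Finset.mem_range.mp hi) hj)
    have hle := hprod (j + 1) (by omega)
    have hprody : 0 < ∏ i ∈ Finset.range (j + 1), y i := lt_of_lt_of_le hprodx hle
    by_contra hne
    push_neg at hne
    have : y j = 0 := le_antisymm hne (hy0 j)
    rw [Finset.prod_eq_zero (Finset.mem_range.mpr (Nat.lt_succ_self j)) this] at hprody
    exact lt_irrefl 0 hprody
  -- reduce to the initial segment
  have hxsum : ∑ j ∈ Finset.range k, x j = ∑ j ∈ Finset.range r, x j := by
    rw [← Finset.sum_range_add_sum_Ico x hrk]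
    have : ∑ j ∈ Finset.Ico r k, x j = 0 :=
      Finset.sum_eq_zero fun j hj => by
        obtain ⟨h1, h2⟩ := Finset.mem_Ico.mp hj
        exact hxzero j h1 h2
    rw [this, add_zero]
  have hysum : ∑ j ∈ Finset.range r, y j ≤ ∑ j ∈ Finset.range k, y j := by
    apply Finset.sum_le_sum_of_subset_of_nonneg
    · exact Finset.range_subset_range.mpr hrk
    · exact fun j _ _ => hy0 j
  rw [hxsum]
  refine le_trans ?_ hysum
  -- core: all terms positive on `range r`
  rcases Nat.eq_zero_or_pos r with hr0 | hrpos
  · simp [hr0]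
  set c : ℕ → ℝ := fun j => Real.log (x j) - Real.log (y j) with hc
  have hSneg : ∀ l ≤ r, ∑ j ∈ Finset.range l, c j ≤ 0 := by
    intro l hl
    have hxl : ∀ j ∈ Finset.range l, x j ≠ 0 :=
      fun j hj => (hxpos j (lt_of_lt_of_le (Finset.mem_range.mp hj) hl)).ne'
    have hyl : ∀ j ∈ Finset.range l, y j ≠ 0 :=
      fun j hj => (hypos j (lt_of_lt_of_le (Finset.mem_range.mp hj) hl)).ne'
    have : ∑ j ∈ Finset.range l, c j =
        Real.log (∏ j ∈ Finset.range l, x j) - Real.log (∏ j ∈ Finset.range l, y j) := by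
      rw [Real.log_prod hxl, Real.log_prod hyl, Finset.sum_sub_distrib]
    rw [this, sub_nonpos]
    apply Real.log_le_log
    · exact Finset.prod_pos fun j hj => hxpos j (lt_of_lt_of_le (Finset.mem_range.mp hj) hl)
    · exact hprod l (le_trans hl hrk)
  have hpt : ∀ j < r, x j - y j ≤ x j * c j := by
    intro j hj
    have hx := hxpos j hj
    have hy := hypos j hj
    have hlog : Real.log (y j) - Real.log (x j) ≤ y j / x j - 1 := by
      have h1 : Real.log (y j / x j) ≤ y j / x j - 1 :=
        Real.log_le_sub_one_of_pos (div_pos hy hx)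
      rwa [Real.log_div hy.ne' hx.ne'] at h1
    have h2 : x j * (Real.log (y j) - Real.log (x j)) ≤ x j * (y j / x j - 1) :=
      mul_le_mul_of_nonneg_left hlog hx.le
    have h3 : x j * (y j / x j - 1) = y j - x j := by field_simp
    show x j - y j ≤ x j * (Real.log (x j) - Real.log (y j))
    nlinarith [h2, h3]
  have habel : ∑ j ∈ Finset.range r, x j * c j ≤ 0 := by
    have hparts := Finset.sum_range_by_parts (M := ℝ) x c r
    simp only [smul_eq_mul] at hparts
    rw [hparts]
    have h1 : x (r - 1) * ∑ i ∈ Finset.range r, c i ≤ 0 :=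
      mul_nonpos_of_nonneg_of_nonpos (hx0 _) (hSneg r le_rfl)
    have h2 : 0 ≤ ∑ i ∈ Finset.range (r - 1), (x (i + 1) - x i) * ∑ j ∈ Finset.range (i + 1), c j := by
      apply Finset.sum_nonneg
      intro i hi
      have hir : i + 1 ≤ r := by
        have := Finset.mem_range.mp hi; omega
      have ha : x (i + 1) - x i ≤ 0 := by linarith [hxa i (i + 1) (Nat.le_succ i)]
      have hb := hSneg (i + 1) hir
      nlinarith
    linarith
  have : ∑ j ∈ Finset.range r, (x j - y j) ≤ ∑ j ∈ Finset.range r, x j * c j := by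
    apply Finset.sum_le_sum
    intro j hj
    exact hpt j (Finset.mem_range.mp hj)
  rw [Finset.sum_sub_distrib] at this
  linarith

/-- Finite-dimensional Hölder inequality with several factors. -/
lemma holder_fin {m k : ℕ} (z : Fin m → Fin k → ℝ) (hz : ∀ i j, 0 ≤ z i j)
    (p : Fin m → ℝ) (hp : ∀ i, 0 < p i) (hpsum : ∑ i, 1 / p i = 1) :
    ∑ j : Fin k, ∏ i : Fin m, z i j ≤ ∏ i : Fin m, (∑ j : Fin k, z i j ^ p i) ^ (1 / p i) := by
  classical
  by_cases hdeg : ∃ i₀, ∑ j : Fin k, z i₀ j ^ p i₀ = 0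
  · obtain ⟨i₀, hi₀⟩ := hdeg
    have hz0 : ∀ j, z i₀ j = 0 := by
      intro j
      have hterm : z i₀ j ^ p i₀ = 0 := by
        have hnn : ∀ j' ∈ Finset.univ, (0:ℝ) ≤ z i₀ j' ^ p i₀ :=
          fun j' _ => Real.rpow_nonneg (hz i₀ j') _
        exact (Finset.sum_eq_zero_iff_of_nonneg hnn).mp hi₀ j (Finset.mem_univ j)
      by_contra hne
      have hpos : 0 < z i₀ j := lt_of_le_of_ne (hz i₀ j) (Ne.symm hne)
      exact absurd hterm (Real.rpow_pos_of_pos hpos _).ne'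
    have hlhs : ∑ j : Fin k, ∏ i : Fin m, z i j = 0 :=
      Finset.sum_eq_zero fun j _ =>
        Finset.prod_eq_zero (Finset.mem_univ i₀) (hz0 j)
    have hrhs : (0:ℝ) ≤ ∏ i : Fin m, (∑ j : Fin k, z i j ^ p i) ^ (1 / p i) :=
      Finset.prod_nonneg fun i _ => Real.rpow_nonneg
        (Finset.sum_nonneg fun j _ => Real.rpow_nonneg (hz i j) _) _
    rw [hlhs]; exact hrhs
  · push_neg at hdeg
    set T : Fin m → ℝ := fun i => ∑ j : Fin k, z i j ^ p i with hT
    have hT0 : ∀ i, 0 < T i := fun i =>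
      lt_of_le_of_ne (Finset.sum_nonneg fun j _ => Real.rpow_nonneg (hz i j) _)
        (Ne.symm (hdeg i))
    set Z : Fin m → ℝ := fun i => T i ^ (1 / p i) with hZ
    have hZ0 : ∀ i, 0 < Z i := fun i => Real.rpow_pos_of_pos (hT0 i) _
    have hZp : ∀ i, Z i ^ p i = T i := by
      intro i
      rw [hZ, ← Real.rpow_mul (le_of_lt (hT0 i)), one_div_mul_cancel (hp i).ne', Real.rpow_one]
    have key : ∀ j : Fin k, ∏ i : Fin m, (z i j / Z i)
        ≤ ∑ i : Fin m, (1 / p i) * (z i j ^ p i / T i) := by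
      intro j
      have hgm := Real.geom_mean_le_arith_mean_weighted Finset.univ (fun i => 1 / p i)
        (fun i => z i j ^ p i / T i) (fun i _ => (one_div_pos.mpr (hp i)).le) hpsum
        (fun i _ => div_nonneg (Real.rpow_nonneg (hz i j) _) (le_of_lt (hT0 i)))
      refine le_trans (le_of_eq ?_) hgm
      refine Finset.prod_congr rfl fun i _ => ?_
      rw [Real.div_rpow (Real.rpow_nonneg (hz i j) _) (le_of_lt (hT0 i))]
      rw [← Real.rpow_mul (hz i j), mul_one_div_cancel (hp i).ne', Real.rpow_one]
    have hsum1 : ∑ j : Fin k, ∑ i : Fin m, (1 / p i) * (z i j ^ p i / T i) = 1 := by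
      rw [Finset.sum_comm]
      calc ∑ i : Fin m, ∑ j : Fin k, (1 / p i) * (z i j ^ p i / T i)
          = ∑ i : Fin m, (1 / p i) * ((∑ j : Fin k, z i j ^ p i) / T i) := by
            refine Finset.sum_congr rfl fun i _ => ?_
            rw [← Finset.mul_sum, ← Finset.sum_div]
        _ = ∑ i : Fin m, (1 / p i) := by
            refine Finset.sum_congr rfl fun i _ => ?_
            rw [show (∑ j : Fin k, z i j ^ p i) = T i from rfl, div_self (hT0 i).ne', mul_one]
        _ = 1 := hpsum
    have hfinal : (∑ j : Fin k, ∏ i : Fin m, z i j) / (∏ i : Fin m, Z i) ≤ 1 := by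
      have h1 : ∑ j : Fin k, ∏ i : Fin m, (z i j / Z i) ≤ 1 := by
        rw [← hsum1]
        exact Finset.sum_le_sum fun j _ => key j
      have h2 : ∑ j : Fin k, ∏ i : Fin m, (z i j / Z i)
          = (∑ j : Fin k, ∏ i : Fin m, z i j) / (∏ i : Fin m, Z i) := by
        rw [Finset.sum_div]
        exact Finset.sum_congr rfl fun j _ => Finset.prod_div_distrib _ _
      rwa [h2] at h1
    have hZprod : 0 < ∏ i : Fin m, Z i := Finset.prod_pos fun i _ => hZ0 i
    calc ∑ j : Fin k, ∏ i : Fin m, z i j ≤ ∏ i : Fin m, Z i :=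
          (div_le_one hZprod).mp hfinal
      _ = ∏ i : Fin m, (∑ j : Fin k, z i j ^ p i) ^ (1 / p i) := rfl

end Majorization

end KyFanAux

/-- Hölder-type inequality for Ky Fan `k`-norms of products:
`Σ_{j≤k} σ_j(A₁⋯A_m)^s ≤ ∏_i (Σ_{j≤k} σ_j(A_i)^{s p_i})^{1/p_i}
  ≤ Σ_i (1/p_i) Σ_{j≤k} σ_j(A_i)^{s p_i}`,
where `p_i > 0` with `Σ 1/p_i = 1` and `s ≥ 1`. -/
theorem ky_fan_product_holder {n m : ℕ} (hm : 0 < m)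
    (A : Fin m → Matrix (Fin n) (Fin n) ℂ) (s : ℝ) (hs : 1 ≤ s)
    (k : ℕ) (hk : k ≤ n) (p : Fin m → ℝ) (hp : ∀ i, 0 < p i)
    (hpsum : ∑ i, 1 / p i = 1) :
    (∑ j : Fin k, svals (List.ofFn A).prod (Fin.castLE hk j) ^ s ≤
      ∏ i, (∑ j : Fin k, svals (A i) (Fin.castLE hk j) ^ (s * p i)) ^ (1 / p i)) ∧
    (∏ i, (∑ j : Fin k, svals (A i) (Fin.castLE hk j) ^ (s * p i)) ^ (1 / p i) ≤
      ∑ i, (1 / p i) * ∑ j : Fin k, svals (A i) (Fin.castLE hk j) ^ (s * p i)) := by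
  have hs0 : (0:ℝ) ≤ s := le_trans zero_le_one hs
  set P : Matrix (Fin n) (Fin n) ℂ := (List.ofFn A).prod with hPdef
  -- part 2 : AM-GM
  have part2 : ∏ i, (∑ j : Fin k, svals (A i) (Fin.castLE hk j) ^ (s * p i)) ^ (1 / p i) ≤
      ∑ i, (1 / p i) * ∑ j : Fin k, svals (A i) (Fin.castLE hk j) ^ (s * p i) :=
    Real.geom_mean_le_arith_mean_weighted Finset.univ _ _
      (fun i _ => (one_div_pos.mpr (hp i)).le) hpsum
      (fun i _ => Finset.sum_nonneg fun j _ => Real.rpow_nonneg (svals_nonneg _ _) _)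
  refine ⟨?_, part2⟩
  -- part 1
  set x : ℕ → ℝ := fun j =>
    if h : j < k then svals P (Fin.castLE hk ⟨j, h⟩) ^ s else 0 with hxdef
  set y : ℕ → ℝ := fun j =>
    if h : j < k then (∏ i, svals (A i) (Fin.castLE hk ⟨j, h⟩)) ^ s else 0 with hydef
  have hx0 : ∀ j, 0 ≤ x j := by
    intro j
    rw [hxdef]
    dsimp only
    split
    · exact Real.rpow_nonneg (svals_nonneg _ _) _
    · exact le_refl 0
  have hy0 : ∀ j, 0 ≤ y j := by
    intro j
    rw [hydef]
    dsimp only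
    split
    · exact Real.rpow_nonneg (Finset.prod_nonneg fun i _ => svals_nonneg _ _) _
    · exact le_refl 0
  have hxa : ∀ i j : ℕ, i ≤ j → x j ≤ x i := by
    intro i j hij
    rw [hxdef]
    dsimp only
    split
    · rename_i hjk
      have hik : i < k := lt_of_le_of_lt hij hjk
      rw [dif_pos hik]
      refine Real.rpow_le_rpow (svals_nonneg _ _) ?_ hs0
      apply svals_antitone
      exact hij
    · exact hx0 i
  -- the log-majorization hypothesis, from Horn's inequality
  have hprod : ∀ l ≤ k, ∏ j ∈ Finset.range l, x j ≤ ∏ j ∈ Finset.range l, y j := by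
    intro l hl
    have hln : l ≤ n := le_trans hl hk
    rw [← Fin.prod_univ_eq_prod_range, ← Fin.prod_univ_eq_prod_range]
    have hxval : ∀ j : Fin l, x ↑j = svals P (Fin.castLE hln j) ^ s := by
      intro j
      rw [hxdef]
      dsimp only
      rw [dif_pos (lt_of_lt_of_le j.2 hl)]
      congr 1
    have hyval : ∀ j : Fin l, y ↑j = (∏ i, svals (A i) (Fin.castLE hln j)) ^ s := by
      intro j
      rw [hydef]
      dsimp only
      rw [dif_pos (lt_of_lt_of_le j.2 hl)]
      congr 1
    rw [Finset.prod_congr rfl fun j _ => hxval j, Finset.prod_congr rfl fun j _ => hyval j]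
    rw [Real.finset_prod_rpow _ _ (fun j _ => svals_nonneg _ _) s]
    rw [Real.finset_prod_rpow _ _
      (fun j _ => Finset.prod_nonneg fun i _ => svals_nonneg _ _) s]
    apply Real.rpow_le_rpow (Finset.prod_nonneg fun j _ => svals_nonneg _ _) ?_ hs0
    have hhl := horn_list hln (List.ofFn A) (by
      intro h
      have := congrArg List.length h
      simp at this
      omega)
    refine le_trans hhl (le_of_eq ?_)
    rw [List.map_ofFn, List.prod_ofFn]
    rw [Finset.prod_comm]
    rfl
  have hmaj := sum_le_sum_of_prod_le hxa hx0 hy0 hprod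
  -- convert back to `Fin k` sums
  have hxsum : ∑ j ∈ Finset.range k, x j = ∑ j : Fin k, svals P (Fin.castLE hk j) ^ s := by
    rw [← Fin.sum_univ_eq_sum_range]
    refine Finset.sum_congr rfl fun j _ => ?_
    rw [hxdef]
    dsimp only
    rw [dif_pos j.2]
  have hysum : ∑ j ∈ Finset.range k, y j
      = ∑ j : Fin k, ∏ i, svals (A i) (Fin.castLE hk j) ^ s := by
    rw [← Fin.sum_univ_eq_sum_range]
    refine Finset.sum_congr rfl fun j _ => ?_
    rw [hydef]
    dsimp only
    rw [dif_pos j.2]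
    exact (Real.finset_prod_rpow _ _ (fun i _ => svals_nonneg _ _) s).symm
  rw [hxsum, hysum] at hmaj
  refine le_trans hmaj ?_
  -- Hölder
  have hhold := holder_fin (fun i j => svals (A i) (Fin.castLE hk j) ^ s)
    (fun i j => Real.rpow_nonneg (svals_nonneg _ _) _) p hp hpsum
  refine le_trans hhold (le_of_eq ?_)
  refine Finset.prod_congr rfl fun i _ => ?_
  congr 1
  refine Finset.sum_congr rfl fun j _ => ?_
  rw [← Real.rpow_mul (svals_nonneg _ _)]
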